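/- Let X be a real normed linear space. If for all nonzero x, y ∈ X the angular distance is at most the skew-angular distance, i.e., ‖x/‖x‖ − y/‖y‖‖ ≤ ‖x/‖y‖ − y/‖x‖‖, then X is an inner product space (the norm satisfies the parallelogram law). -/

import Mathlib

set_option maxHeartbeats 1000000

section Stmt12Aux

variable {X : Type*} [NormedAddCommGroup X] [NormedSpace ℝ X]

/-- Lorch-type lower bound derived from the hypothesis. -/
lemma llow
    (h : ∀ x y : X, x ≠ 0 → y ≠ 0 →
      ‖(1 / ‖x‖) • x - (1 / ‖y‖) • y‖ ≤ ‖(1 / ‖y‖) • x - (1 / ‖x‖) • y‖)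
    (e f : X) (he : ‖e‖ = 1) (hf : ‖f‖ = 1) (a b : ℝ) (ha : 0 < a) (hb : 0 < b) :
    Real.sqrt (a * b) * ‖e + f‖ ≤ ‖a • e + b • f‖ := by
  set α := Real.sqrt a with hαdef
  set β := Real.sqrt b with hβdef
  have hα : 0 < α := Real.sqrt_pos.2 ha
  have hβ : 0 < β := Real.sqrt_pos.2 hb
  have ha' : α * α = a := Real.mul_self_sqrt ha.le
  have hb' : β * β = b := Real.mul_self_sqrt hb.le
  have he0 : e ≠ 0 := by intro h0; rw [h0, norm_zero] at he; norm_num at he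
  have hf0 : f ≠ 0 := by intro h0; rw [h0, norm_zero] at hf; norm_num at hf
  have hx : (α • e : X) ≠ 0 := smul_ne_zero hα.ne' he0
  have hy : ((-β) • f : X) ≠ 0 := smul_ne_zero (neg_ne_zero.2 hβ.ne') hf0
  have hxn : ‖α • e‖ = α := by rw [norm_smul, he, Real.norm_eq_abs, abs_of_pos hα, mul_one]
  have hyn : ‖(-β) • f‖ = β := by
    rw [norm_smul, hf, Real.norm_eq_abs, abs_neg, abs_of_pos hβ, mul_one]
  have H := h (α • e) ((-β) • f) hx hy
  rw [hxn, hyn] at H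
  have e1 : (1 / α) • (α • e) - (1 / β) • ((-β) • f) = e + f := by
    match_scalars <;> field_simp
  have e2 : (1 / β) • (α • e) - (1 / α) • ((-β) • f) = (α / β) • e + (β / α) • f := by
    match_scalars <;> field_simp
  rw [e1, e2] at H
  have e3 : (α * β) • ((α / β) • e + (β / α) • f) = a • e + b • f := by
    match_scalars <;> field_simp <;> nlinarith [ha', hb']
  have key : α * β * ‖(α / β) • e + (β / α) • f‖ = ‖a • e + b • f‖ := by
    rw [← e3, norm_smul, Real.norm_eq_abs, abs_of_pos (mul_pos hα hβ)]
  calc Real.sqrt (a * b) * ‖e + f‖ = α * β * ‖e + f‖ := by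
        rw [Real.sqrt_mul ha.le]
    _ ≤ α * β * ‖(α / β) • e + (β / α) • f‖ := by
        exact mul_le_mul_of_nonneg_left H (mul_pos hα hβ).le
    _ = ‖a • e + b • f‖ := key

lemma fu
    (llow : ∀ (e f : X), ‖e‖ = 1 → ‖f‖ = 1 → ∀ a b : ℝ, 0 < a → 0 < b →
      Real.sqrt (a * b) * ‖e + f‖ ≤ ‖a • e + b • f‖)
    (e f : X) (he : ‖e‖ = 1) (hf : ‖f‖ = 1) (α β : ℝ) (hα : 0 < α) (hβ : 0 < β) :
    ‖α • e + β • f‖ = ‖β • e + α • f‖ := by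
  by_cases hef : e + f = 0
  · have hfe : f = -e := by
      have h1 : e = -f := add_eq_zero_iff_eq_neg.1 hef
      rw [h1]; simp
    subst hfe
    have h2 : α • e + β • -e = (α - β) • e := by module
    have h3 : β • e + α • -e = (β - α) • e := by module
    rw [h2, h3, norm_smul, norm_smul, he, Real.norm_eq_abs, Real.norm_eq_abs, abs_sub_comm]
  · have hne : 0 < ‖e + f‖ := norm_pos_iff.2 hef
    have he0 : e ≠ 0 := by intro h0; rw [h0, norm_zero] at he; norm_num at he
    set u : X := α • e + β • f with hu_def
    set w : X := β • e + α • f with hw_def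
    have hu : u ≠ 0 := by
      intro h0
      have h1 : α • e = -(β • f) := by
        rw [hu_def] at h0; rw [add_eq_zero_iff_eq_neg] at h0; exact h0
      have h2 : α = β := by
        have := congrArg norm h1
        rw [norm_neg, norm_smul, norm_smul, he, hf, Real.norm_eq_abs, Real.norm_eq_abs,
          abs_of_pos hα, abs_of_pos hβ] at this
        simpa using this
      have h3 : α • (e + f) = (0 : X) := by
        rw [smul_add, h2, h0.symm, hu_def]; rw [h2]
      exact hef ((smul_eq_zero.1 h3).resolve_left hα.ne')
    have hw : w ≠ 0 := by
      intro h0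
      have h1 : β • e = -(α • f) := by
        rw [hw_def] at h0; rw [add_eq_zero_iff_eq_neg] at h0; exact h0
      have h2 : β = α := by
        have := congrArg norm h1
        rw [norm_neg, norm_smul, norm_smul, he, hf, Real.norm_eq_abs, Real.norm_eq_abs,
          abs_of_pos hα, abs_of_pos hβ] at this
        simpa using this
      have h3 : β • (e + f) = (0 : X) := by
        rw [smul_add, h2, h0.symm, hw_def]; rw [h2]
      exact hef ((smul_eq_zero.1 h3).resolve_left hβ.ne')
    set A : ℝ := ‖u‖ with hA_def
    set B : ℝ := ‖w‖ with hB_def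
    have hA : 0 < A := norm_pos_iff.2 hu
    have hB : 0 < B := norm_pos_iff.2 hw
    -- step a : lower bound
    have hc1 : 0 < B * α + A * β := by positivity
    have hc2 : 0 < B * β + A * α := by positivity
    have step_a := llow e f he hf (B * α + A * β) (B * β + A * α) hc1 hc2
    have hvec1 : (B * α + A * β) • e + (B * β + A * α) • f = B • u + A • w := by
      rw [hu_def, hw_def]; module
    rw [hvec1] at step_a
    -- step b : upper bound via llow applied to normalized u, w
    have hu1 : ‖A⁻¹ • u‖ = 1 := by
      rw [norm_smul, Real.norm_eq_abs, abs_of_pos (inv_pos.2 hA), ← hA_def, inv_mul_cancel₀ hA.ne']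
    have hw1 : ‖B⁻¹ • w‖ = 1 := by
      rw [norm_smul, Real.norm_eq_abs, abs_of_pos (inv_pos.2 hB), ← hB_def, inv_mul_cancel₀ hB.ne']
    have hsAB : 0 < Real.sqrt (A * B) := Real.sqrt_pos.2 (by positivity)
    have hsq : Real.sqrt (A * B) * Real.sqrt (A * B) = A * B :=
      Real.mul_self_sqrt (by positivity)
    have step_b := llow (A⁻¹ • u) (B⁻¹ • w) hu1 hw1 (A * Real.sqrt (A * B))
      (B * Real.sqrt (A * B)) (by positivity) (by positivity)
    have hab : Real.sqrt (A * Real.sqrt (A * B) * (B * Real.sqrt (A * B))) = A * B := by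
      have : A * Real.sqrt (A * B) * (B * Real.sqrt (A * B)) = (A * B) ^ 2 := by
        nlinarith [hsq]
      rw [this, Real.sqrt_sq (by positivity)]
    rw [hab] at step_b
    have hv2 : (A * Real.sqrt (A * B)) • (A⁻¹ • u) + (B * Real.sqrt (A * B)) • (B⁻¹ • w)
        = Real.sqrt (A * B) • (u + w) := by
      match_scalars <;> field_simp <;> ring
    rw [hv2] at step_b
    have hv3 : (A * B) • (A⁻¹ • u + B⁻¹ • w) = B • u + A • w := by
      match_scalars <;> field_simp <;> ring
    have lhs_eq : A * B * ‖A⁻¹ • u + B⁻¹ • w‖ = ‖B • u + A • w‖ := by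
      rw [← hv3, norm_smul, Real.norm_eq_abs, abs_of_pos (mul_pos hA hB)]
    rw [lhs_eq] at step_b
    have hv4 : u + w = (α + β) • (e + f) := by rw [hu_def, hw_def]; module
    have rhs_eq : ‖Real.sqrt (A * B) • (u + w)‖ = Real.sqrt (A * B) * (α + β) * ‖e + f‖ := by
      rw [hv4, norm_smul, norm_smul, Real.norm_eq_abs, Real.norm_eq_abs,
        abs_of_pos hsAB, abs_of_pos (by positivity : (0:ℝ) < α + β)]
      ring
    rw [rhs_eq] at step_b
    -- combine
    clear_value u w A B
    have chain : Real.sqrt ((B * α + A * β) * (B * β + A * α)) * ‖e + f‖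
        ≤ Real.sqrt (A * B) * (α + β) * ‖e + f‖ := le_trans step_a step_b
    have key : Real.sqrt ((B * α + A * β) * (B * β + A * α)) ≤ Real.sqrt (A * B) * (α + β) :=
      le_of_mul_le_mul_right chain hne
    have hPnn : (0:ℝ) ≤ (B * α + A * β) * (B * β + A * α) := by positivity
    have sq_le : (B * α + A * β) * (B * β + A * α) ≤ A * B * (α + β) ^ 2 := by
      have h1 := mul_self_le_mul_self (Real.sqrt_nonneg _) key
      rw [Real.mul_self_sqrt hPnn] at h1
      have h2 : Real.sqrt (A*B)*(α+β)*(Real.sqrt (A*B)*(α+β)) = A*B*(α+β)^2 := by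
        linear_combination (α + β) ^ 2 * hsq
      linarith [h1, h2]
    have h4 : (A - B) ^ 2 ≤ 0 := by
      have hpos := mul_pos hα hβ
      nlinarith [sq_le, hpos]
    have h6 : (A - B) ^ 2 = 0 := le_antisymm h4 (sq_nonneg _)
    have h5 : A - B = 0 := by
      exact pow_eq_zero_iff (two_ne_zero) |>.1 h6
    have hABeq : A = B := by linarith
    exact hABeq

lemma fr
    (fu : ∀ (e f : X), ‖e‖ = 1 → ‖f‖ = 1 → ∀ α β : ℝ, 0 < α → 0 < β →
      ‖α • e + β • f‖ = ‖β • e + α • f‖)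
    (e f : X) (he : ‖e‖ = 1) (hf : ‖f‖ = 1) (α β : ℝ) :
    ‖α • e + β • f‖ = ‖β • e + α • f‖ := by
  have hfn : ‖-f‖ = 1 := by rw [norm_neg]; exact hf
  have hen : ‖-e‖ = 1 := by rw [norm_neg]; exact he
  rcases lt_trichotomy α 0 with hα | hα | hα
  · rcases lt_trichotomy β 0 with hβ | hβ | hβ
    · -- both negative
      have h1 := fu e f he hf (-α) (-β) (by linarith) (by linarith)
      have e1 : (-α) • e + (-β) • f = -(α • e + β • f) := by module
      have e2 : (-β) • e + (-α) • f = -(β • e + α • f) := by module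
      rw [e1, e2, norm_neg, norm_neg] at h1
      exact h1
    · subst hβ
      simp only [zero_smul, add_zero, zero_add, norm_smul, he, hf, mul_one]
    · -- α < 0 < β
      have h1 := fu f (-e) hf hen β (-α) hβ (by linarith)
      have e1 : β • f + (-α) • (-e) = α • e + β • f := by module
      have e2 : (-α) • f + β • (-e) = -(β • e + α • f) := by module
      rw [e1, e2, norm_neg] at h1
      exact h1
  · subst hα
    simp only [zero_smul, add_zero, zero_add, norm_smul, he, hf, mul_one]
  · rcases lt_trichotomy β 0 with hβ | hβ | hβ
    · -- β < 0 < α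
      have h1 := fu e (-f) he hfn α (-β) hα (by linarith)
      have e1 : α • e + (-β) • (-f) = α • e + β • f := by module
      have e2 : (-β) • e + α • (-f) = -(β • e + α • f) := by module
      rw [e1, e2, norm_neg] at h1
      exact h1
    · subst hβ
      simp only [zero_smul, add_zero, zero_add, norm_smul, he, hf, mul_one]
    · exact fu e f he hf α β hα hβ

lemma fvec
    (fr' : ∀ (e f : X), ‖e‖ = 1 → ‖f‖ = 1 → ∀ α β : ℝ,
      ‖α • e + β • f‖ = ‖β • e + α • f‖)
    (P Q : X) (hPQ : ‖P‖ = ‖Q‖) (lam mu : ℝ) :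
    ‖lam • P + mu • Q‖ = ‖mu • P + lam • Q‖ := by
  by_cases hP : P = 0
  · have hQ : Q = 0 := by
      rw [hP, norm_zero] at hPQ; exact norm_eq_zero.1 hPQ.symm
    rw [hP, hQ]; simp
  · have hr : 0 < ‖P‖ := norm_pos_iff.2 hP
    set r := ‖P‖ with hr_def
    have he : ‖r⁻¹ • P‖ = 1 := by
      rw [norm_smul, Real.norm_eq_abs, abs_of_pos (inv_pos.2 hr), inv_mul_cancel₀ hr.ne']
    have hf : ‖r⁻¹ • Q‖ = 1 := by
      rw [norm_smul, Real.norm_eq_abs, abs_of_pos (inv_pos.2 hr), ← hPQ, inv_mul_cancel₀ hr.ne']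
    have h1 := fr' (r⁻¹ • P) (r⁻¹ • Q) he hf (lam * r) (mu * r)
    have e1 : (lam * r) • (r⁻¹ • P) + (mu * r) • (r⁻¹ • Q) = lam • P + mu • Q := by
      match_scalars <;> field_simp
    have e2 : (mu * r) • (r⁻¹ • P) + (lam * r) • (r⁻¹ • Q) = mu • P + lam • Q := by
      match_scalars <;> field_simp
    rw [e1, e2] at h1
    exact h1

lemma hIso
    (fvec' : ∀ (P Q : X), ‖P‖ = ‖Q‖ → ∀ lam mu : ℝ,
      ‖lam • P + mu • Q‖ = ‖mu • P + lam • Q‖)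
    (A B : X) (hAB : ‖A + B‖ = ‖A - B‖) (t : ℝ) :
    ‖A + t • B‖ = ‖A - t • B‖ := by
  have h1 := fvec' (A + B) (A - B) hAB ((1 + t) / 2) ((1 - t) / 2)
  have e1 : ((1 + t) / 2) • (A + B) + ((1 - t) / 2) • (A - B) = A + t • B := by module
  have e2 : ((1 - t) / 2) • (A + B) + ((1 + t) / 2) • (A - B) = A - t • B := by module
  rw [e1, e2] at h1
  exact h1

lemma norm_eq_sqrt
    (e z : X) (he : ‖e‖ = 1) (hz : ‖z‖ = 1)
    (hperp : ∀ t : ℝ, ‖e + t • z‖ = ‖e - t • z‖)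
    (hH : ∀ A B : X, ‖A + B‖ = ‖A - B‖ → ∀ t : ℝ, ‖A + t • B‖ = ‖A - t • B‖) :
    ∀ a b : ℝ, ‖a • e + b • z‖ = Real.sqrt (a ^ 2 + b ^ 2) := by
  -- E1 : evenness in second slot
  have E1 : ∀ a b : ℝ, ‖a • e - b • z‖ = ‖a • e + b • z‖ := by
    intro a b
    by_cases ha : a = 0
    · subst ha; simp
    · have h1 := hperp (b / a)
      have e1 : a • (e + (b / a) • z) = a • e + b • z := by
        match_scalars <;> field_simp
      have e2 : a • (e - (b / a) • z) = a • e - b • z := by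
        match_scalars <;> (field_simp; try ring)
      calc ‖a • e - b • z‖ = ‖a • (e - (b / a) • z)‖ := by rw [e2]
        _ = |a| * ‖e - (b / a) • z‖ := by rw [norm_smul, Real.norm_eq_abs]
        _ = |a| * ‖e + (b / a) • z‖ := by rw [h1]
        _ = ‖a • (e + (b / a) • z)‖ := by rw [norm_smul, Real.norm_eq_abs]
        _ = ‖a • e + b • z‖ := by rw [e1]
  -- E2 : evenness in first slot
  have E2 : ∀ a b : ℝ, ‖(-a) • e + b • z‖ = ‖a • e + b • z‖ := by
    intro a b
    have e1 : (-a) • e + b • z = -(a • e - b • z) := by module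
    rw [e1, norm_neg, E1]
  -- E3 : symmetry
  have E3 : ∀ a b : ℝ, ‖a • e + b • z‖ = ‖b • e + a • z‖ := by
    have hpq : ‖(e + z) + (e - z)‖ = ‖(e + z) - (e - z)‖ := by
      have e1 : (e + z) + (e - z) = (2 : ℝ) • e := by module
      have e2 : (e + z) - (e - z) = (2 : ℝ) • z := by module
      rw [e1, e2, norm_smul, norm_smul, he, hz]
    have key := hH (e + z) (e - z) hpq
    -- key t : ‖(1+t)•e + (1-t)•z‖ = ‖(1-t)•e + (1+t)•z‖
    have key' : ∀ t : ℝ, ‖(1 + t) • e + (1 - t) • z‖ = ‖(1 - t) • e + (1 + t) • z‖ := by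
      intro t
      have e1 : (e + z) + t • (e - z) = (1 + t) • e + (1 - t) • z := by module
      have e2 : (e + z) - t • (e - z) = (1 - t) • e + (1 + t) • z := by module
      have := key t
      rw [e1, e2] at this
      exact this
    intro a b
    by_cases hs : a + b = 0
    · have hb : b = -a := by linarith
      subst hb
      calc ‖a • e + (-a) • z‖ = ‖a • e - a • z‖ := by rw [sub_eq_add_neg, ← neg_smul]
        _ = ‖a • e + a • z‖ := E1 a a
        _ = ‖(-(-a)) • e + a • z‖ := by rw [neg_neg]
        _ = ‖(-a) • e + a • z‖ := E2 (-a) a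
    · set s := a + b with hs_def
      have h2 := key' ((a - b) / s)
      have e1 : (s / 2) • ((1 + (a - b) / s) • e + (1 - (a - b) / s) • z) = a • e + b • z := by
        match_scalars <;> (field_simp; ring)
      have e2 : (s / 2) • ((1 - (a - b) / s) • e + (1 + (a - b) / s) • z) = b • e + a • z := by
        match_scalars <;> (field_simp; ring)
      calc ‖a • e + b • z‖ = ‖(s / 2) • ((1 + (a - b) / s) • e + (1 - (a - b) / s) • z)‖ := by
            rw [e1]
        _ = |s / 2| * ‖(1 + (a - b) / s) • e + (1 - (a - b) / s) • z‖ := by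
            rw [norm_smul, Real.norm_eq_abs]
        _ = |s / 2| * ‖(1 - (a - b) / s) • e + (1 + (a - b) / s) • z‖ := by rw [h2]
        _ = ‖(s / 2) • ((1 - (a - b) / s) • e + (1 + (a - b) / s) • z)‖ := by
            rw [norm_smul, Real.norm_eq_abs]
        _ = ‖b • e + a • z‖ := by rw [e2]
  -- E4 : circle values
  have E4 : ∀ t : ℝ, ‖(1 - t ^ 2) • e + (2 * t) • z‖ = 1 + t ^ 2 := by
    intro t
    set p : X := e + t • z with hp_def
    set q : X := (-t) • e + z with hq_def
    have hiso : ‖p + q‖ = ‖p - q‖ := by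
      have e1 : p + q = (1 - t) • e + (1 + t) • z := by rw [hp_def, hq_def]; module
      have e2 : p - q = (1 + t) • e - (1 - t) • z := by rw [hp_def, hq_def]; module
      rw [e1, e2, E1 (1 + t) (1 - t), E3 (1 + t) (1 - t)]
    have h1 := hH p q hiso t
    have e3 : p + t • q = (1 - t ^ 2) • e + (2 * t) • z := by rw [hp_def, hq_def]; module
    have e4 : p - t • q = (1 + t ^ 2) • e := by rw [hp_def, hq_def]; module
    rw [e3, e4, norm_smul, Real.norm_eq_abs, he, mul_one,
      abs_of_pos (by positivity : (0:ℝ) < 1 + t ^ 2)] at h1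
    exact h1
  -- conclusion
  intro a b
  have habs : ∀ a b : ℝ, 0 ≤ a → ‖a • e + b • z‖ = Real.sqrt (a ^ 2 + b ^ 2) := by
    intro a b ha
    by_cases h0 : a ^ 2 + b ^ 2 = 0
    · have ha0 : a = 0 := by nlinarith [sq_nonneg a, sq_nonneg b]
      have hb0 : b = 0 := by nlinarith [sq_nonneg a, sq_nonneg b]
      rw [ha0, hb0]; simp
    · have hrpos : 0 < Real.sqrt (a ^ 2 + b ^ 2) := Real.sqrt_pos.2 (by positivity)
      set r := Real.sqrt (a ^ 2 + b ^ 2) with hr_def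
      have hr2 : r ^ 2 = a ^ 2 + b ^ 2 := Real.sq_sqrt (by positivity)
      have hra : a < r ∨ a = r → True := fun _ => trivial
      have hs : 0 < a + r := by
        rcases eq_or_lt_of_le ha with h | h
        · rw [← h] at hr2 ⊢
          have : 0 < r := hrpos
          linarith
        · linarith
      set t := b / (a + r) with ht_def
      have key := E4 t
      have h1t : 1 - t ^ 2 = 2 * a / (a + r) := by
        rw [ht_def]
        field_simp
        nlinarith [hr2]
      have h2t : 1 + t ^ 2 = 2 * r / (a + r) := by
        rw [ht_def]
        field_simp
        nlinarith [hr2]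
      have e5 : ((a + r) / 2) • ((1 - t ^ 2) • e + (2 * t) • z) = a • e + b • z := by
        rw [h1t, ht_def]
        match_scalars <;> field_simp
      calc ‖a • e + b • z‖ = ‖((a + r) / 2) • ((1 - t ^ 2) • e + (2 * t) • z)‖ := by rw [e5]
        _ = |(a + r) / 2| * ‖(1 - t ^ 2) • e + (2 * t) • z‖ := by
            rw [norm_smul, Real.norm_eq_abs]
        _ = ((a + r) / 2) * (1 + t ^ 2) := by
            rw [key, abs_of_pos (by linarith : (0:ℝ) < (a + r) / 2)]
        _ = r := by rw [h2t]; field_simp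
  rcases le_or_gt 0 a with ha | ha
  · exact habs a b ha
  · have h1 := habs (-a) b (by linarith)
    rw [E2 a b] at h1
    rw [h1]
    congr 1
    ring

theorem main_test
    (hH : ∀ A B : X, ‖A + B‖ = ‖A - B‖ → ∀ t : ℝ, ‖A + t • B‖ = ‖A - t • B‖)
    (nes : ∀ (e z : X), ‖e‖ = 1 → ‖z‖ = 1 →
      (∀ t : ℝ, ‖e + t • z‖ = ‖e - t • z‖) →
      ∀ a b : ℝ, ‖a • e + b • z‖ = Real.sqrt (a ^ 2 + b ^ 2)) :
    ∀ x y : X, ‖x + y‖ ^ 2 + ‖x - y‖ ^ 2 = 2 * ‖x‖ ^ 2 + 2 * ‖y‖ ^ 2 := by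
  intro x y
  by_cases hx : x = 0
  · subst hx
    rw [zero_add, zero_sub, norm_neg, norm_zero]
    ring
  by_cases hdep : ∃ c : ℝ, y = c • x
  · obtain ⟨c, rfl⟩ := hdep
    have e1 : x + c • x = (1 + c) • x := by module
    have e2 : x - c • x = (1 - c) • x := by module
    rw [e1, e2, norm_smul, norm_smul, Real.norm_eq_abs, Real.norm_eq_abs,
      norm_smul, Real.norm_eq_abs]
    rw [mul_pow, mul_pow, mul_pow, sq_abs, sq_abs, sq_abs]
    ring
  have hy : y ≠ 0 := fun h0 => hdep ⟨0, by rw [h0, zero_smul]⟩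
  have hxn : 0 < ‖x‖ := norm_pos_iff.2 hx
  have hyn : 0 < ‖y‖ := norm_pos_iff.2 hy
  set e : X := ‖x‖⁻¹ • x with he_def
  set f : X := ‖y‖⁻¹ • y with hf_def
  have he : ‖e‖ = 1 := by
    rw [he_def, norm_smul, Real.norm_eq_abs, abs_of_pos (inv_pos.2 hxn), inv_mul_cancel₀ hxn.ne']
  have hf : ‖f‖ = 1 := by
    rw [hf_def, norm_smul, Real.norm_eq_abs, abs_of_pos (inv_pos.2 hyn), inv_mul_cancel₀ hyn.ne']
  -- independence
  have hind : ∀ s t : ℝ, t ≠ 0 → s • e + t • f ≠ 0 := by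
    intro s t ht h0
    apply hdep
    refine ⟨‖y‖ * (t⁻¹ * (-s)) * ‖x‖⁻¹, ?_⟩
    have h1 : t • f = -(s • e) := eq_neg_of_add_eq_zero_right h0
    have h2 : f = t⁻¹ • (-(s • e)) := by rw [← h1, inv_smul_smul₀ ht]
    have hy' : y = ‖y‖ • f := by rw [hf_def, smul_inv_smul₀ hyn.ne']
    conv_lhs => rw [hy', h2, he_def]
    match_scalars
    ring
  -- IVT
  have hee : ‖e + e‖ = 2 := by
    have h1 : e + e = (2:ℝ) • e := by module
    rw [h1, norm_smul, he, Real.norm_eq_abs]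
    norm_num
  have habs1 : |(1:ℝ)| = (1:ℝ) := by norm_num
  have habsm1 : |(-1:ℝ)| = (1:ℝ) := by norm_num
  obtain ⟨t₀, ht₀mem, hgt₀⟩ : ∃ t₀ ∈ Set.Icc (-1:ℝ) 1,
      ‖e + (t₀ • e + (1 - |t₀|) • f)‖ - ‖e - (t₀ • e + (1 - |t₀|) • f)‖ = 0 := by
    set g : ℝ → ℝ := fun t => ‖e + (t • e + (1 - |t|) • f)‖ - ‖e - (t • e + (1 - |t|) • f)‖
      with hg_def
    have hwcont : Continuous (fun t : ℝ => t • e + (1 - |t|) • f) :=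
      (continuous_id.smul continuous_const).add
        ((continuous_const.sub continuous_abs).smul continuous_const)
    have hcont : Continuous g :=
      ((continuous_const.add hwcont).norm).sub ((continuous_const.sub hwcont).norm)
    have hsub := intermediate_value_Icc (by norm_num : (-1:ℝ) ≤ 1) hcont.continuousOn
    have hg1 : g 1 = 2 := by
      rw [hg_def]
      simp only []
      rw [habs1]
      have hv : (1:ℝ) • e + (1 - (1:ℝ)) • f = e := by module
      rw [hv, hee, sub_self, norm_zero, sub_zero]
    have hgm1 : g (-1) = -2 := by
      rw [hg_def]
      simp only []
      rw [habsm1]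
      have hv : (-1:ℝ) • e + (1 - (1:ℝ)) • f = -e := by module
      rw [hv]
      have h1 : e + -e = (0:X) := by module
      have h2 : e - -e = e + e := by module
      rw [h1, h2, hee, norm_zero, zero_sub]
    have hmem : (0:ℝ) ∈ Set.Icc (g (-1)) (g 1) := by
      rw [hg1, hgm1]; constructor <;> norm_num
    obtain ⟨t₀, h1, h2⟩ := hsub hmem
    exact ⟨t₀, h1, h2⟩
  have ht₀abs : |t₀| ≤ 1 := abs_le.2 ⟨ht₀mem.1, ht₀mem.2⟩
  have hcpos : 0 < 1 - |t₀| := by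
    rcases lt_or_eq_of_le ht₀abs with hlt | heq
    · linarith
    · exfalso
      rcases (abs_eq (by norm_num : (0:ℝ) ≤ 1)).1 heq with h1 | h1
      · rw [h1, habs1] at hgt₀
        have hv : (1:ℝ) • e + (1 - (1:ℝ)) • f = e := by module
        rw [hv, hee, sub_self, norm_zero, sub_zero] at hgt₀
        norm_num at hgt₀
      · rw [h1, habsm1] at hgt₀
        have hv : (-1:ℝ) • e + (1 - (1:ℝ)) • f = -e := by module
        rw [hv] at hgt₀
        have hh1 : e + -e = (0:X) := by module
        have hh2 : e - -e = e + e := by module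
        rw [hh1, hh2, hee, norm_zero, zero_sub] at hgt₀
        norm_num at hgt₀
  set z₀ : X := t₀ • e + (1 - |t₀|) • f with hz₀_def
  have hz₀ : z₀ ≠ 0 := hind t₀ (1 - |t₀|) hcpos.ne'
  have hz₀n : 0 < ‖z₀‖ := norm_pos_iff.2 hz₀
  set z : X := ‖z₀‖⁻¹ • z₀ with hz_def
  have hz : ‖z‖ = 1 := by
    rw [hz_def, norm_smul, Real.norm_eq_abs, abs_of_pos (inv_pos.2 hz₀n),
      inv_mul_cancel₀ hz₀n.ne']
  have hiso0 : ‖e + z₀‖ = ‖e - z₀‖ := by linarith [hgt₀]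
  have hperp : ∀ t : ℝ, ‖e + t • z‖ = ‖e - t • z‖ := by
    intro t
    have h1 := hH e z₀ hiso0 (t * ‖z₀‖⁻¹)
    have h2 : (t * ‖z₀‖⁻¹) • z₀ = t • z := by
      rw [hz_def, smul_smul]
    rw [h2] at h1
    exact h1
  have key := nes e z he hz hperp
  -- coordinates
  have hzne : ‖z₀‖ ≠ 0 := hz₀n.ne'
  have hcne : (1 - |t₀|) ≠ 0 := hcpos.ne'
  have hx_coord : x = ‖x‖ • e + (0:ℝ) • z := by
    rw [he_def, zero_smul, add_zero, smul_inv_smul₀ hxn.ne']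
  obtain ⟨p, q, hyc⟩ : ∃ p q : ℝ, y = p • e + q • z := by
    refine ⟨-(‖y‖ * t₀ / (1 - |t₀|)), ‖y‖ * ‖z₀‖ / (1 - |t₀|), ?_⟩
    have hy' : y = ‖y‖ • f := by rw [hf_def, smul_inv_smul₀ hyn.ne']
    conv_lhs => rw [hy']
    rw [hz_def, hz₀_def]
    match_scalars <;> field_simp [show ‖t₀ • e + (1 - |t₀|) • f‖ ≠ 0 from hzne] <;> ring
  have n1 : ‖x + y‖ ^ 2 = (‖x‖ + p) ^ 2 + q ^ 2 := by
    have hv : x + y = (‖x‖ + p) • e + q • z := by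
      nth_rewrite 1 [hx_coord]
      rw [hyc]
      module
    rw [hv, key, Real.sq_sqrt (by positivity)]
  have n2 : ‖x - y‖ ^ 2 = (‖x‖ - p) ^ 2 + q ^ 2 := by
    have hv : x - y = (‖x‖ - p) • e + (-q) • z := by
      nth_rewrite 1 [hx_coord]
      rw [hyc]
      module
    rw [hv, key, Real.sq_sqrt (by positivity)]
    ring
  have n3 : ‖y‖ ^ 2 = p ^ 2 + q ^ 2 := by
    conv_lhs => rw [hyc, key]
    rw [Real.sq_sqrt (by positivity)]
  rw [n1, n2, n3]
  ring

end Stmt12Aux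

theorem stmt_12 {X : Type*} [NormedAddCommGroup X] [NormedSpace ℝ X]
    (h : ∀ x y : X, x ≠ 0 → y ≠ 0 →
      ‖(1 / ‖x‖) • x - (1 / ‖y‖) • y‖ ≤ ‖(1 / ‖y‖) • x - (1 / ‖x‖) • y‖) :
    ∀ x y : X, ‖x + y‖ ^ 2 + ‖x - y‖ ^ 2 = 2 * ‖x‖ ^ 2 + 2 * ‖y‖ ^ 2 := by
  have hL := llow h
  have hH : ∀ A B : X, ‖A + B‖ = ‖A - B‖ → ∀ t : ℝ, ‖A + t • B‖ = ‖A - t • B‖ :=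
    hIso (fvec (fr (fu hL)))
  exact main_test hH (fun e z he hz hperp => norm_eq_sqrt e z he hz hperp hH)
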